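/- arXiv:2503.13686 — 6 statements merged into one kernel-verified Lean document; each statement's English description precedes it below -/
import Mathlib

section
/- Let α ∈ ℝ \ {2} and κ > 0. For any differentiable, strictly decreasing probability density f to which the down transformation applies, the down transformation commutes with rescaling according to D_α[f^[κ]](s) = κ^{α-2} · D_α[f](κ^{α-2} s), i.e. D_α[f^[κ]] = (D_α[f])^[κ^{α-2}]. For α = 2 one instead has D_2[f^[κ]](s) = D_2[f](s + ln κ). -/
open MeasureTheory Real Set Filter Bornology

/-- The canonical change of variable `s(x)` of the down transformation:
`s(x) = f(x)^(2-α)/(α-2)` for `α ≠ 2` and `s(x) = -log f(x)` for `α = 2`. -/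
noncomputable def sChange (α : ℝ) (f : ℝ → ℝ) (x : ℝ) : ℝ :=
  if α = 2 then -Real.log (f x) else f x ^ (2 - α) / (α - 2)

/-- The value of the down transformation at the point `s(x)`:
`D_α[f](s(x)) = f(x)^α |f'(x)|⁻¹`. -/
noncomputable def downAt (α : ℝ) (f : ℝ → ℝ) (x : ℝ) : ℝ :=
  f x ^ α / |deriv f x|

/-- `g` is the down-`α`-transform of `f`, where `I` is the domain of `f`. -/
def IsDownTransform (α : ℝ) (f g : ℝ → ℝ) (I : Set ℝ) : Prop :=
  ∀ x ∈ I, g (sChange α f x) = downAt α f x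

/-- The derivative `u'(x) = -|(α-2)x|^(1/(α-2)) f(x)` (resp. `-eˣ f(x)` for `α = 2`)
of the change of variable of the up transformation. -/
noncomputable def upDeriv (α : ℝ) (f : ℝ → ℝ) (x : ℝ) : ℝ :=
  -((if α = 2 then Real.exp x else |(α - 2) * x| ^ (α - 2)⁻¹) * f x)

/-- The value of the up transformation at the point `u(x)`:
`U_α[f](u(x)) = |(α-2)x|^(1/(2-α))` (resp. `e^(-x)` for `α = 2`). -/
noncomputable def upPoint (α : ℝ) (x : ℝ) : ℝ :=
  if α = 2 then Real.exp (-x) else |(α - 2) * x| ^ (2 - α)⁻¹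

/-- `g` is an up-`α`-transform of `f` (the primitive `u` being defined up to translation),
where `I` is the domain of `f`. -/
def IsUpTransform (α : ℝ) (f g : ℝ → ℝ) (I : Set ℝ) : Prop :=
  ∃ u : ℝ → ℝ, (∀ x ∈ I, HasDerivAt u (upDeriv α f x) x) ∧
    ∀ x ∈ I, g (u x) = upPoint α x

/-- The canonical primitive of the up change of variable, with reference point `x₀`:
`u(x) = ∫_x^{x₀} |(α-2)t|^(1/(α-2)) f(t) dt` (resp. with `eᵗ` for `α = 2`). -/
noncomputable def upPrim (α x₀ : ℝ) (f : ℝ → ℝ) (x : ℝ) : ℝ :=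
  ∫ t in x..x₀, (if α = 2 then Real.exp t else |(α - 2) * t| ^ (α - 2)⁻¹) * f t

/-- `f` is a probability density supported on `I`. -/
structure IsDensityOn (f : ℝ → ℝ) (I : Set ℝ) : Prop where
  pos : ∀ x ∈ I, 0 < f x
  zero : ∀ x ∉ I, f x = 0
  normalized : (∫ x in I, f x) = 1

/-- `f` is differentiable with `f' < 0` on `I`. -/
def IsSmoothDecOn (f : ℝ → ℝ) (I : Set ℝ) : Prop :=
  (∀ x ∈ I, DifferentiableAt ℝ f x) ∧ (∀ x ∈ I, deriv f x < 0)

/-- the down transformation versus rescaling `f^[κ](x) = κ f(κx)`. -/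
theorem down_transform_scaling
    (α κ xi xf : ℝ) (hκ : 0 < κ) (f g gk : ℝ → ℝ)
    (hf : IsDensityOn f (Set.Ioo xi xf))
    (hmon : IsSmoothDecOn f (Set.Ioo xi xf))
    (hg : IsDownTransform α f g (Set.Ioo xi xf))
    (hgk : IsDownTransform α (fun y => κ * f (κ * y)) gk (Set.Ioo (xi / κ) (xf / κ))) :
    (α ≠ 2 → ∀ s ∈ sChange α (fun y => κ * f (κ * y)) '' Set.Ioo (xi / κ) (xf / κ),
      gk s = κ ^ (α - 2) * g (κ ^ (α - 2) * s)) ∧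
    (α = 2 → ∀ s ∈ sChange 2 (fun y => κ * f (κ * y)) '' Set.Ioo (xi / κ) (xf / κ),
      gk s = g (s + Real.log κ)) := by

  obtain ⟨hdiff, hderiv⟩ := hmon
  have hmem : ∀ y ∈ Set.Ioo (xi/κ) (xf/κ), κ * y ∈ Set.Ioo xi xf := by
    rintro y ⟨h1, h2⟩
    exact ⟨by rwa [div_lt_iff₀ hκ, mul_comm] at h1, by rwa [lt_div_iff₀ hκ, mul_comm] at h2⟩
  have hderivk : ∀ y ∈ Set.Ioo (xi/κ) (xf/κ),
      deriv (fun y => κ * f (κ * y)) y = κ * (deriv f (κ * y) * κ) := by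
    intro y hy
    have hd := (hdiff _ (hmem y hy)).hasDerivAt
    have h1 : HasDerivAt (fun y : ℝ => κ * y) κ y := by
      simpa using (hasDerivAt_id y).const_mul κ
    exact ((hd.comp y h1).const_mul κ).deriv
  have key : ∀ y ∈ Set.Ioo (xi/κ) (xf/κ),
      downAt α (fun y => κ * f (κ * y)) y = κ ^ (α - 2) * downAt α f (κ * y) := by
    intro y hy
    have hx := hmem y hy
    have hfx : 0 < f (κ * y) := hf.pos _ hx
    have hd : deriv f (κ * y) < 0 := hderiv _ hx
    have habs : (0:ℝ) < |deriv f (κ * y)| := abs_pos.2 hd.ne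
    rw [downAt, downAt, hderivk y hy, abs_mul, abs_mul, abs_of_pos hκ,
      Real.mul_rpow hκ.le hfx.le]
    have hκα : κ ^ α = κ ^ (α - 2) * κ ^ (2:ℝ) := by
      rw [← Real.rpow_add hκ]; ring_nf
    have h2 : κ ^ (2:ℝ) = κ * κ := by
      rw [show (2:ℝ) = ((2:ℕ):ℝ) by norm_num, Real.rpow_natCast]; ring
    rw [hκα, h2]
    field_simp
  constructor
  · intro hα s hs
    obtain ⟨y, hy, rfl⟩ := hs
    have hx := hmem y hy
    have hfx : 0 < f (κ * y) := hf.pos _ hx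
    have hsc : κ ^ (α - 2) * sChange α (fun y => κ * f (κ * y)) y = sChange α f (κ * y) := by
      simp only [sChange, if_neg hα]
      rw [Real.mul_rpow hκ.le hfx.le]
      have h1 : κ ^ (α - 2) * κ ^ (2 - α) = 1 := by
        rw [← Real.rpow_add hκ]; norm_num
      calc κ ^ (α - 2) * (κ ^ (2 - α) * f (κ * y) ^ (2 - α) / (α - 2))
          = (κ ^ (α - 2) * κ ^ (2 - α)) * (f (κ * y) ^ (2 - α) / (α - 2)) := by ring
        _ = f (κ * y) ^ (2 - α) / (α - 2) := by rw [h1, one_mul]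
    rw [hgk y hy, key y hy, hsc, hg _ hx]
  · intro hα s hs
    subst hα
    obtain ⟨y, hy, rfl⟩ := hs
    have hx := hmem y hy
    have hfx : 0 < f (κ * y) := hf.pos _ hx
    have hsc : sChange 2 (fun y => κ * f (κ * y)) y + Real.log κ = sChange 2 f (κ * y) := by
      simp only [sChange, if_true]
      rw [Real.log_mul hκ.ne' hfx.ne']
      ring
    have hκ2 : κ ^ ((2:ℝ) - 2) = 1 := by norm_num
    rw [hgk y hy, key y hy, hsc, hg _ hx, hκ2, one_mul]
end

section
/- Let α ∈ ℝ \ {2} and κ > 0. For any probability density f, the up transformation commutes with rescaling according to U_α[f^[κ]] = (U_α[f])^[κ^{1/(α-2)}], i.e. U_α[f^[κ]](u) = κ^{1/(α-2)} · U_α[f](κ^{1/(α-2)} u). -/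
open MeasureTheory Real Set Filter Bornology

/-- the up transformation versus rescaling `f^[κ](x) = κ f(κx)`:
`U_α[f^[κ]](u) = κ^(1/(α-2)) U_α[f](κ^(1/(α-2)) u)`. -/
theorem up_transform_scaling
    (α κ xi xf x₀ : ℝ) (hα : α ≠ 2) (hκ : 0 < κ) (hx₀ : x₀ ∈ Set.Ioo xi xf)
    (f g₁ g₂ : ℝ → ℝ)
    (hf : IsDensityOn f (Set.Ioo xi xf))
    (hg₂ : ∀ x ∈ Set.Ioo xi xf, g₂ (upPrim α x₀ f x) = upPoint α x)
    (hg₁ : ∀ x ∈ Set.Ioo (xi / κ) (xf / κ),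
      g₁ (upPrim α (x₀ / κ) (fun y => κ * f (κ * y)) x) = upPoint α x) :
    ∀ x ∈ Set.Ioo (xi / κ) (xf / κ),
      g₁ (upPrim α (x₀ / κ) (fun y => κ * f (κ * y)) x)
        = κ ^ (α - 2)⁻¹ *
          g₂ (κ ^ (α - 2)⁻¹ * upPrim α (x₀ / κ) (fun y => κ * f (κ * y)) x) := by
  intro x hx
  have hκ' : κ ≠ 0 := ne_of_gt hκ
  set c : ℝ := κ ^ (α - 2)⁻¹ with hc
  have hcpos : 0 < c := Real.rpow_pos_of_pos hκ _
  have hmem : κ * x ∈ Set.Ioo xi xf := by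
    constructor
    · rw [mul_comm]; exact (div_lt_iff₀ hκ).mp hx.1
    · rw [mul_comm]; exact (lt_div_iff₀ hκ).mp hx.2
  -- Step A: scaling of the primitive
  have hA : c * upPrim α (x₀ / κ) (fun y => κ * f (κ * y)) x = upPrim α x₀ f (κ * x) := by
    have key : upPrim α (x₀ / κ) (fun y => κ * f (κ * y)) x
        = c⁻¹ * upPrim α x₀ f (κ * x) := by
      unfold upPrim
      simp only [if_neg hα]
      set F : ℝ → ℝ := fun s => |(α - 2) * (s / κ)| ^ (α - 2)⁻¹ * (κ * f s) with hF
      have h1 : (∫ t in x..x₀ / κ, |(α - 2) * t| ^ (α - 2)⁻¹ * (κ * f (κ * t)))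
          = ∫ t in x..x₀ / κ, F (κ * t) := by
        apply intervalIntegral.integral_congr
        intro t _
        simp only [hF]
        rw [mul_div_cancel_left₀ _ hκ']
      have h2 := intervalIntegral.integral_comp_mul_left (a := x) (b := x₀ / κ) F hκ'
      rw [h1, h2, mul_div_cancel₀ _ hκ']
      have h3 : ∀ s : ℝ, F s = (κ / c) * (|(α - 2) * s| ^ (α - 2)⁻¹ * f s) := by
        intro s
        have he : (α - 2) * (s / κ) = ((α - 2) * s) / κ := by ring
        simp only [hF, he]
        rw [abs_div, abs_of_pos hκ, Real.div_rpow (abs_nonneg _) hκ.le]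
        field_simp [hc]
        rw [hc]; ring
      rw [intervalIntegral.integral_congr (fun s _ => h3 s),
        intervalIntegral.integral_const_mul, smul_eq_mul]
      field_simp
    rw [key, ← mul_assoc, mul_inv_cancel₀ (ne_of_gt hcpos), one_mul]
  -- Step C: scaling of upPoint
  have hC : upPoint α (κ * x) = c⁻¹ * upPoint α x := by
    unfold upPoint
    simp only [if_neg hα]
    have h3 : (α - 2) * (κ * x) = κ * ((α - 2) * x) := by ring
    rw [h3, abs_mul, abs_of_pos hκ, Real.mul_rpow hκ.le (abs_nonneg _)]
    congr 1
    have : (2 - α)⁻¹ = -(α - 2)⁻¹ := by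
      rw [← inv_neg]; ring_nf
    rw [this, Real.rpow_neg hκ.le]
  rw [hg₁ x hx, hA, hg₂ _ hmem, hC, ← mul_assoc, mul_inv_cancel₀ (ne_of_gt hcpos), one_mul]
end

section
/- Let f be a differentiable, strictly decreasing probability density and α ∈ ℝ \ {2}. Then for every p > 0 such that the quantities are well defined, σ_p[D_α[f]] = N_{1+(2-α)p}[f]^{α-2} / |2-α|; equivalently, for λ ≠ 1, N_λ[U_α[f]] = (|2-α| · σ_{(λ-1)/(2-α)}[f])^{1/(α-2)}. -/
open MeasureTheory Real Set Filter Bornology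

/-- the `p`-typical deviation of the down transform is the Rényi entropy
power of the original density, `σ_p[D_α f] = N_{1+(2-α)p}[f]^(α-2)/|2-α|`; equivalently
`N_λ[U_α f] = (|2-α| σ_{(λ-1)/(2-α)}[f])^(1/(α-2))`. -/
theorem down_moment_is_entropy_power
    (α xi xf : ℝ) (hα : α ≠ 2) (I : Set ℝ) (hI : I = Set.Ioo xi xf)
    (f g u h : ℝ → ℝ)
    (hf : IsDensityOn f I) (hmon : IsSmoothDecOn f I)
    (hg : IsDownTransform α f g I)
    (hu : ∀ x ∈ I, HasDerivAt u (upDeriv α f x) x)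
    (hh : ∀ x ∈ I, h (u x) = upPoint α x)
    (p lam : ℝ) (hp : 0 < p) (hlam : lam ≠ 1)
    (hint1 : MeasureTheory.IntegrableOn (fun s => |s| ^ p * g s) (sChange α f '' I))
    (hint2 : MeasureTheory.IntegrableOn (fun x => f x ^ (1 + (2 - α) * p)) I)
    (hint3 : MeasureTheory.IntegrableOn (fun v => h v ^ lam) (u '' I))
    (hint4 : MeasureTheory.IntegrableOn (fun x => |x| ^ ((lam - 1) / (2 - α)) * f x) I) :
    (∫ s in sChange α f '' I, |s| ^ p * g s) ^ (1 / p)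
      = ((∫ x in I, f x ^ (1 + (2 - α) * p)) ^ (1 / (1 - (1 + (2 - α) * p)))) ^ (α - 2)
        / |2 - α| ∧
    (∫ v in u '' I, h v ^ lam) ^ (1 / (1 - lam))
      = (|2 - α| *
          (∫ x in I, |x| ^ ((lam - 1) / (2 - α)) * f x) ^ ((2 - α) / (lam - 1)))
        ^ (α - 2)⁻¹ := by
  subst hI
  have hα2 : α - 2 ≠ 0 := sub_ne_zero.mpr hα
  have h2α : (2 : ℝ) - α ≠ 0 := sub_ne_zero.mpr (Ne.symm hα)
  have hlam1 : lam - 1 ≠ 0 := sub_ne_zero.mpr hlam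
  have hmeas : MeasurableSet (Set.Ioo xi xf) := measurableSet_Ioo
  obtain ⟨hdiff, hneg⟩ := hmon
  have hA : (0 : ℝ) < |α - 2| := abs_pos.mpr hα2
  constructor
  · -- Part 1
    set sf : ℝ → ℝ := fun x => -(deriv f x * f x ^ (1 - α)) with hsf
    have hs_eq : sChange α f = fun x => f x ^ (2 - α) / (α - 2) := by
      funext x; simp [sChange, hα]
    have hsD : ∀ x ∈ Set.Ioo xi xf, HasDerivAt (sChange α f) (sf x) x := by
      intro x hx
      have hfx := hf.pos x hx
      have h1 := ((hdiff x hx).hasDerivAt.rpow_const (p := 2 - α)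
        (Or.inl hfx.ne')).div_const (α - 2)
      rw [hs_eq]
      refine h1.congr_deriv ?_
      have h2 : (2 : ℝ) - α - 1 = 1 - α := by ring
      rw [h2]
      simp only [hsf]
      rw [div_eq_iff hα2]
      ring
    have hmono : StrictMonoOn (sChange α f) (Set.Ioo xi xf) := by
      apply strictMonoOn_of_deriv_pos (convex_Ioo xi xf)
      · intro x hx; exact (hsD x hx).continuousAt.continuousWithinAt
      · intro x hx
        rw [interior_Ioo] at hx
        rw [(hsD x hx).deriv]
        have hfx := hf.pos x hx
        have hd := hneg x hx
        have hr : 0 < f x ^ (1 - α) := rpow_pos_of_pos hfx _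
        simp only [hsf]
        nlinarith
    have hcov1 : ∫ s in sChange α f '' Set.Ioo xi xf, |s| ^ p * g s
        = ∫ x in Set.Ioo xi xf,
            |sf x| • (|sChange α f x| ^ p * g (sChange α f x)) :=
      integral_image_eq_integral_abs_deriv_smul hmeas
        (fun x hx => (hsD x hx).hasDerivWithinAt) hmono.injOn _
    have hpt1 : ∀ x ∈ Set.Ioo xi xf,
        |sf x| • (|sChange α f x| ^ p * g (sChange α f x))
          = f x ^ (1 + (2 - α) * p) / |α - 2| ^ p := by
      intro x hx
      have hfx := hf.pos x hx
      have hd := hneg x hx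
      have hdne : |deriv f x| ≠ 0 := abs_ne_zero.mpr hd.ne
      have hApne : |α - 2| ^ p ≠ 0 := (rpow_pos_of_pos hA p).ne'
      rw [smul_eq_mul, hg x hx]
      simp only [sChange, downAt, if_neg hα, hsf]
      rw [abs_neg, abs_mul, abs_of_pos (rpow_pos_of_pos hfx _), abs_div,
        abs_of_pos (rpow_pos_of_pos hfx _),
        Real.div_rpow (rpow_pos_of_pos hfx _).le (abs_nonneg _),
        ← Real.rpow_mul hfx.le]
      have key : f x ^ (1 - α) * (f x ^ ((2 - α) * p) * f x ^ α)
          = f x ^ (1 + (2 - α) * p) := by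
        rw [← Real.rpow_add hfx, ← Real.rpow_add hfx]
        ring_nf
      calc |deriv f x| * f x ^ (1 - α)
            * (f x ^ ((2 - α) * p) / |α - 2| ^ p * (f x ^ α / |deriv f x|))
          = f x ^ (1 - α) * (f x ^ ((2 - α) * p) * f x ^ α) / |α - 2| ^ p := by
            field_simp
        _ = f x ^ (1 + (2 - α) * p) / |α - 2| ^ p := by rw [key]
    have hB : 0 ≤ ∫ x in Set.Ioo xi xf, f x ^ (1 + (2 - α) * p) :=
      setIntegral_nonneg hmeas fun x hx => (rpow_pos_of_pos (hf.pos x hx) _).le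
    rw [hcov1, setIntegral_congr_fun hmeas hpt1, integral_div, abs_sub_comm 2 α,
      Real.div_rpow hB (rpow_nonneg hA.le _)]
    congr 1
    · rw [← Real.rpow_mul hB]
      congr 1
      have hden : 1 - (1 + (2 - α) * p) = (α - 2) * p := by ring
      rw [hden]
      field_simp
    · rw [← Real.rpow_mul hA.le, mul_one_div_cancel hp.ne', Real.rpow_one]
  · -- Part 2
    set e : ℝ := (lam - 1) / (2 - α) with he
    have he0 : e ≠ 0 := div_ne_zero hlam1 h2α
    have hanti : AntitoneOn u (Set.Ioo xi xf) := by
      apply antitoneOn_of_deriv_nonpos (convex_Ioo xi xf)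
      · intro x hx; exact (hu x hx).continuousAt.continuousWithinAt
      · intro x hx
        rw [interior_Ioo] at hx
        exact (hu x hx).differentiableAt.differentiableWithinAt
      · intro x hx
        rw [interior_Ioo] at hx
        rw [(hu x hx).deriv]
        simp only [upDeriv, if_neg hα]
        exact neg_nonpos.mpr (mul_nonneg (rpow_nonneg (abs_nonneg _) _)
          (hf.pos x hx).le)
    have hinjaux : ∀ a ∈ Set.Ioo xi xf, ∀ b ∈ Set.Ioo xi xf, a < b → u a = u b → False := by
      intro a ha b hb hlt hab
      have hsub : Set.Ioo a b ⊆ Set.Ioo xi xf := Set.Ioo_subset_Ioo ha.1.le hb.2.le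
      have hconst : ∀ z ∈ Set.Ioo a b, u z = u a := by
        intro z hz
        have h1 : u z ≤ u a := hanti ha (hsub hz) hz.1.le
        have h2 : u b ≤ u z := hanti (hsub hz) hb hz.2.le
        have h3 : u a ≤ u z := hab ▸ h2
        linarith
      obtain ⟨z, hz, hz0⟩ : ∃ z ∈ Set.Ioo a b, z ≠ 0 := by
        by_cases h0 : (a + b) / 2 = 0
        · have ha0 : a < 0 := by nlinarith
          refine ⟨a / 2, ⟨by linarith, by linarith⟩, ?_⟩
          exact div_ne_zero ha0.ne two_ne_zero
        · exact ⟨(a + b) / 2, ⟨by linarith, by linarith⟩, h0⟩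
      have hzI := hsub hz
      have hEq : u =ᶠ[nhds z] fun _ => u a := by
        filter_upwards [Ioo_mem_nhds hz.1 hz.2] with y hy using hconst y hy
      have hD0 : HasDerivAt u 0 z :=
        (hasDerivAt_const z (u a)).congr_of_eventuallyEq hEq
      have huniq := (hu z hzI).unique hD0
      have hpos : 0 < |(α - 2) * z| ^ (α - 2)⁻¹ * f z :=
        mul_pos (rpow_pos_of_pos (abs_pos.mpr (mul_ne_zero hα2 hz0)) _)
          (hf.pos z hzI)
      simp only [upDeriv, if_neg hα] at huniq
      linarith [neg_eq_zero.mp huniq ▸ hpos]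
    have hinj : Set.InjOn u (Set.Ioo xi xf) := by
      intro a ha b hb hab
      by_contra hne
      rcases Ne.lt_or_gt hne with hlt | hlt
      · exact hinjaux a ha b hb hlt hab
      · exact hinjaux b hb a ha hlt hab.symm
    have hcov2 : ∫ v in u '' Set.Ioo xi xf, h v ^ lam
        = ∫ x in Set.Ioo xi xf, |upDeriv α f x| • h (u x) ^ lam :=
      integral_image_eq_integral_abs_deriv_smul hmeas
        (fun x hx => (hu x hx).hasDerivWithinAt) hinj _
    have hpt2 : ∀ x ∈ Set.Ioo xi xf,
        |upDeriv α f x| • h (u x) ^ lam = |α - 2| ^ e * (|x| ^ e * f x) := by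
      intro x hx
      have hfx := hf.pos x hx
      rw [smul_eq_mul, hh x hx]
      simp only [upDeriv, upPoint, if_neg hα]
      rw [abs_neg, abs_mul, abs_of_nonneg (rpow_nonneg (abs_nonneg _) _),
        abs_of_pos hfx, ← Real.rpow_mul (abs_nonneg _)]
      by_cases hx0 : x = 0
      · subst hx0
        simp [Real.zero_rpow (inv_ne_zero hα2), Real.zero_rpow he0]
      · have habs : 0 < |(α - 2) * x| := abs_pos.mpr (mul_ne_zero hα2 hx0)
        have hexp : (α - 2)⁻¹ + (2 - α)⁻¹ * lam = e := by
          rw [he]; field_simp; ring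
        calc |(α - 2) * x| ^ (α - 2)⁻¹ * f x * |(α - 2) * x| ^ ((2 - α)⁻¹ * lam)
            = |(α - 2) * x| ^ ((α - 2)⁻¹ + (2 - α)⁻¹ * lam) * f x := by
              rw [Real.rpow_add habs]; ring
          _ = |α - 2| ^ e * (|x| ^ e * f x) := by
              rw [hexp, abs_mul, Real.mul_rpow (abs_nonneg _) (abs_nonneg _)]
              ring
    have hM : 0 ≤ ∫ x in Set.Ioo xi xf, |x| ^ e * f x :=
      setIntegral_nonneg hmeas fun x hx =>
        mul_nonneg (rpow_nonneg (abs_nonneg _) _) (hf.pos x hx).le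
    rw [hcov2, setIntegral_congr_fun hmeas hpt2, integral_const_mul,
      abs_sub_comm 2 α,
      Real.mul_rpow (rpow_nonneg hA.le _) hM,
      Real.mul_rpow hA.le (rpow_nonneg hM _)]
    congr 1
    · rw [← Real.rpow_mul hA.le]
      congr 1
      have h1l : (1 : ℝ) - lam ≠ 0 := fun hc => hlam1 (by linarith)
      rw [he]
      field_simp
      ring
    · rw [← Real.rpow_mul hM]
      congr 1
      have h1l : (1 : ℝ) - lam ≠ 0 := fun hc => hlam1 (by linarith)
      field_simp
      ring
end

section
/- Let f be a differentiable, strictly decreasing probability density and α ∈ ℝ \ {2}. Then for every λ ≠ 1 such that the quantities are well defined, N_λ[D_α[f]] = φ_{1-λ, 2-α}[f]^{2-α}; equivalently, for p ≠ 0 and β ≠ 0, φ_{p,β}[U_{2-β}[f]] = N_{1-p}[f]^{1/β}. -/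
open MeasureTheory Real Set Filter Bornology

private lemma pw1 (a d α lam : ℝ) (ha : 0 < a) (hd : d < 0) (hα : α ≠ 2) :
    |d * (2 - α) * a ^ ((2 - α) - 1) / (α - 2)| * (a ^ α / |d|) ^ lam
      = |a ^ ((2 - α) - 2) * d| ^ (1 - lam) * a := by
  have hd0 : (0:ℝ) < |d| := abs_pos.mpr hd.ne
  have hα2 : (α - 2) ≠ 0 := sub_ne_zero.mpr hα
  rw [abs_div, abs_mul, abs_mul, abs_of_pos (Real.rpow_pos_of_pos ha _),
      Real.div_rpow (Real.rpow_nonneg ha.le _) (abs_nonneg d),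
      ← Real.rpow_mul ha.le,
      abs_mul, abs_of_pos (Real.rpow_pos_of_pos ha _),
      Real.mul_rpow (Real.rpow_pos_of_pos ha _).le (abs_nonneg d),
      ← Real.rpow_mul ha.le, abs_sub_comm 2 α]
  rw [Real.rpow_def_of_pos ha, Real.rpow_def_of_pos ha, Real.rpow_def_of_pos ha,
      Real.rpow_def_of_pos hd0, Real.rpow_def_of_pos hd0]
  nth_rewrite 1 [show |d| = Real.exp (Real.log |d|) by rw [Real.exp_log hd0]]
  nth_rewrite 4 [show a = Real.exp (Real.log a) by rw [Real.exp_log ha]]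
  field_simp [Real.exp_ne_zero, abs_ne_zero.mpr hα2]
  simp only [← Real.exp_add]
  congr 1
  ring_nf

private lemma pw2 (β e c sg p : ℝ) (hβ : β ≠ 0) (he : 0 < e) (hc : 0 < c)
    (hsg : |sg| = 1) :
    |(-(c ^ (2 - β - 2)⁻¹ * e))| * (|(c ^ (2 - (2 - β))⁻¹) ^ (β - 2)
        * (sg * (2 - β - 2) * (2 - (2 - β))⁻¹ * c ^ ((2 - (2 - β))⁻¹ - 1)
           * (-(c ^ (2 - β - 2)⁻¹ * e))⁻¹)| ^ p * c ^ (2 - (2 - β))⁻¹)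
      = e ^ (1 - p) := by
  rw [show (2:ℝ) - β - 2 = -β by ring, show (2:ℝ) - (2 - β) = β by ring, inv_neg]
  have h1 : (0:ℝ) < c ^ (-β⁻¹) * e := mul_pos (rpow_pos_of_pos hc _) he
  rw [abs_neg, abs_of_pos h1, ← Real.rpow_mul hc.le]
  rw [show |c ^ (β⁻¹ * (β - 2)) * (sg * -β * β⁻¹ * c ^ (β⁻¹ - 1) * (-(c ^ (-β⁻¹) * e))⁻¹)|
      = c ^ (β⁻¹ * (β - 2)) * (|sg| * |β| * |β|⁻¹ * c ^ (β⁻¹ - 1) * (c ^ (-β⁻¹) * e)⁻¹) by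
    simp only [abs_mul, abs_inv, abs_neg, abs_of_pos (rpow_pos_of_pos hc (β⁻¹ - 1)),
      abs_of_pos h1, abs_of_pos (rpow_pos_of_pos hc (β⁻¹ * (β - 2)))]]
  rw [hsg, one_mul, mul_inv_cancel₀ (abs_ne_zero.mpr hβ), one_mul, mul_inv,
      ← Real.rpow_neg hc.le]
  rw [Real.mul_rpow (rpow_nonneg hc.le _)
        (by positivity : (0:ℝ) ≤ c ^ (β⁻¹ - 1) * (c ^ (-(-β⁻¹)) * e⁻¹)),
      Real.mul_rpow (rpow_nonneg hc.le _)
        (by positivity : (0:ℝ) ≤ c ^ (-(-β⁻¹)) * e⁻¹),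
      Real.mul_rpow (rpow_nonneg hc.le _) (inv_nonneg.mpr he.le),
      ← Real.rpow_mul hc.le, ← Real.rpow_mul hc.le, ← Real.rpow_mul hc.le,
      Real.inv_rpow he.le]
  rw [Real.rpow_def_of_pos hc, Real.rpow_def_of_pos hc, Real.rpow_def_of_pos hc,
      Real.rpow_def_of_pos hc, Real.rpow_def_of_pos hc,
      Real.rpow_def_of_pos he, Real.rpow_def_of_pos he]
  nth_rewrite 1 [show e = Real.exp (Real.log e) by rw [Real.exp_log he]]
  rw [← Real.exp_neg]
  field_simp [Real.exp_ne_zero]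
  rw [← Real.exp_add, ← Real.exp_add, ← Real.exp_add, ← Real.exp_add, ← Real.exp_add,
      ← Real.exp_add]
  congr 1
  ring

private lemma abs_sign_cast (y : ℝ) (hy : y ≠ 0) : |((SignType.sign y : ℝ))| = 1 := by
  rcases hy.lt_or_gt with h | h
  · simp [sign_neg h]
  · simp [sign_pos h]

/-- the Rényi entropy power of the down transform is a Fisher-like
information of the original density, `N_λ[D_α f] = φ_{1-λ,2-α}[f]^(2-α)`; equivalently
`φ_{p,β}[U_{2-β} f] = N_{1-p}[f]^(1/β)`. -/
theorem down_entropy_is_fisher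
    (α xi xf : ℝ) (hα : α ≠ 2) (I : Set ℝ) (hI : I = Set.Ioo xi xf)
    (f g u h : ℝ → ℝ) (lam p β : ℝ)
    (hf : IsDensityOn f I) (hmon : IsSmoothDecOn f I)
    (hlam : lam ≠ 1) (hp : p ≠ 0) (hβ : β ≠ 0)
    (hg : IsDownTransform α f g I)
    (hu : ∀ x ∈ I, HasDerivAt u (upDeriv (2 - β) f x) x)
    (hh : ∀ x ∈ I, h (u x) = upPoint (2 - β) x)
    (hint1 : MeasureTheory.IntegrableOn (fun s => g s ^ lam) (sChange α f '' I))
    (hint2 : MeasureTheory.IntegrableOn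
      (fun x => |f x ^ ((2 - α) - 2) * deriv f x| ^ (1 - lam) * f x) I)
    (hint3 : MeasureTheory.IntegrableOn
      (fun v => |h v ^ (β - 2) * deriv h v| ^ p * h v) (u '' I))
    (hint4 : MeasureTheory.IntegrableOn (fun x => f x ^ (1 - p)) I) :
    (∫ s in sChange α f '' I, g s ^ lam) ^ (1 / (1 - lam))
      = ((∫ x in I, |f x ^ ((2 - α) - 2) * deriv f x| ^ (1 - lam) * f x)
          ^ (((1 - lam) * (2 - α))⁻¹)) ^ (2 - α) ∧
    (∫ v in u '' I, |h v ^ (β - 2) * deriv h v| ^ p * h v) ^ ((p * β)⁻¹)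
      = ((∫ x in I, f x ^ (1 - p)) ^ ((1 - (1 - p))⁻¹)) ^ β⁻¹ := by
  subst hI
  set I := Set.Ioo xi xf with hIdef
  have hIo : IsOpen I := isOpen_Ioo
  have hIm : MeasurableSet I := measurableSet_Ioo
  have hIc : Convex ℝ I := convex_Ioo xi xf
  obtain ⟨hdiff, hder⟩ := hmon
  have h2α : (2:ℝ) - α ≠ 0 := sub_ne_zero.mpr (Ne.symm hα)
  have h1lam : (1:ℝ) - lam ≠ 0 := sub_ne_zero.mpr (Ne.symm hlam)
  have h2β : (2:ℝ) - β ≠ 2 := by intro hc; apply hβ; linarith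
  constructor
  · -- PART 1
    set s' : ℝ → ℝ := fun x => deriv f x * (2 - α) * f x ^ ((2 - α) - 1) / (α - 2)
      with hs'def
    have hsfun : sChange α f = fun t => f t ^ (2 - α) / (α - 2) := by
      funext t; simp only [sChange, if_neg hα]
    have hs : ∀ x ∈ I, HasDerivAt (sChange α f) (s' x) x := by
      intro x hx
      have h1 : HasDerivAt (fun t => f t ^ (2 - α))
          (deriv f x * (2 - α) * f x ^ ((2 - α) - 1)) x :=
        ((hdiff x hx).hasDerivAt).rpow_const (Or.inl (hf.pos x hx).ne')
      rw [hsfun]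
      exact h1.div_const (α - 2)
    have hs'pos : ∀ x ∈ I, 0 < s' x := by
      intro x hx
      have : s' x = (-deriv f x) * f x ^ ((2 - α) - 1) := by
        rw [hs'def]
        have hα2 : (α:ℝ) - 2 ≠ 0 := sub_ne_zero.mpr hα
        field_simp
        ring
      rw [this]
      exact mul_pos (neg_pos.mpr (hder x hx)) (Real.rpow_pos_of_pos (hf.pos x hx) _)
    have hinj : Set.InjOn (sChange α f) I := by
      apply StrictMonoOn.injOn
      apply strictMonoOn_of_deriv_pos hIc
      · exact fun x hx => (hs x hx).continuousAt.continuousWithinAt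
      · intro x hx
        rw [hIo.interior_eq] at hx
        rw [(hs x hx).deriv]
        exact hs'pos x hx
    have E1 : ∫ s in sChange α f '' I, g s ^ lam
        = ∫ x in I, |s' x| • (g (sChange α f x) ^ lam) :=
      integral_image_eq_integral_abs_deriv_smul hIm
        (fun x hx => (hs x hx).hasDerivWithinAt) hinj _
    have E2 : ∫ x in I, |s' x| • (g (sChange α f x) ^ lam)
        = ∫ x in I, |f x ^ ((2 - α) - 2) * deriv f x| ^ (1 - lam) * f x := by
      apply setIntegral_congr_fun hIm
      intro x hx
      simp only [smul_eq_mul]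
      rw [hg x hx]
      simp only [downAt]
      exact pw1 (f x) (deriv f x) α lam (hf.pos x hx) (hder x hx) hα
    rw [E1, E2]
    have hX : 0 ≤ ∫ x in I, |f x ^ ((2 - α) - 2) * deriv f x| ^ (1 - lam) * f x :=
      setIntegral_nonneg hIm fun x hx =>
        mul_nonneg (Real.rpow_nonneg (abs_nonneg _) _) (hf.pos x hx).le
    rw [← Real.rpow_mul hX]
    congr 1
    field_simp
  · -- PART 2
    have hupDeq : upDeriv (2 - β) f = fun t => -(|(2 - β - 2) * t| ^ (2 - β - 2)⁻¹ * f t) := by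
      funext t; simp only [upDeriv, if_neg h2β]
    have hβ2 : (2:ℝ) - β - 2 ≠ 0 := by intro hc; apply hβ; linarith
    have hu'nonpos : ∀ x ∈ I, upDeriv (2 - β) f x ≤ 0 := by
      intro x hx
      rw [hupDeq]
      exact neg_nonpos_of_nonneg
        (mul_nonneg (Real.rpow_nonneg (abs_nonneg _) _) (hf.pos x hx).le)
    have hu'neg : ∀ x ∈ I, x ≠ 0 → upDeriv (2 - β) f x < 0 := by
      intro x hx hx0
      rw [hupDeq]
      have hcpos : 0 < |(2 - β - 2) * x| := abs_pos.mpr (mul_ne_zero hβ2 hx0)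
      exact neg_neg_iff_pos.mpr
        (mul_pos (Real.rpow_pos_of_pos hcpos _) (hf.pos x hx))
    have hanti : AntitoneOn u I := by
      apply antitoneOn_of_deriv_nonpos hIc
      · exact fun x hx => (hu x hx).continuousAt.continuousWithinAt
      · intro x hx
        rw [hIo.interior_eq] at hx
        exact ((hu x hx).differentiableAt).differentiableWithinAt
      · intro x hx
        rw [hIo.interior_eq] at hx
        rw [(hu x hx).deriv]
        exact hu'nonpos x hx
    have hinj : Set.InjOn u I := by
      have key : ∀ x ∈ I, ∀ y ∈ I, x < y → u x = u y → False := by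
        intro x hx y hy hlt heq
        obtain ⟨z, hz, hz0⟩ : ∃ z, z ∈ Set.Ioo x y ∧ z ≠ 0 := by
          rcases ne_or_eq ((x + y) / 2) 0 with hne | he0
          · exact ⟨(x + y) / 2, ⟨by linarith, by linarith⟩, hne⟩
          · have hxneg : x < 0 := by linarith
            exact ⟨x / 2, ⟨by linarith, by linarith⟩, by
              exact ne_of_lt (by linarith)⟩
        have hzI : z ∈ I := ⟨lt_trans hx.1 hz.1, lt_trans hz.2 hy.2⟩
        have hIccI : Set.Icc x y ⊆ I := fun t ht => ⟨lt_of_lt_of_le hx.1 ht.1,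
          lt_of_le_of_lt ht.2 hy.2⟩
        have hconst : ∀ t ∈ Set.Icc x y, u t = u x := by
          intro t ht
          have h1 : u t ≤ u x := hanti hx (hIccI ht) ht.1
          have h2 : u y ≤ u t := hanti (hIccI ht) hy ht.2
          rw [heq] at *
          exact le_antisymm h1 h2
        have hev : ∀ᶠ t in nhds z, u t = u x :=
          Filter.eventually_of_mem (isOpen_Ioo.mem_nhds hz)
            (fun t ht => hconst t (Set.Ioo_subset_Icc_self ht))
        have hz0' : HasDerivAt u 0 z :=
          (hasDerivAt_const z (u x)).congr_of_eventuallyEq hev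
        have := hz0'.unique (hu z hzI)
        exact absurd this.symm (ne_of_lt (hu'neg z hzI hz0))
      intro x hx y hy heq
      by_contra hne
      rcases Ne.lt_or_gt hne with hl | hl
      · exact absurd heq (fun heq => key x hx y hy hl heq)
      · exact absurd heq.symm (fun heq => key y hy x hx hl heq)
    have E3 : ∫ v in u '' I, |h v ^ (β - 2) * deriv h v| ^ p * h v
        = ∫ x in I, |upDeriv (2 - β) f x| •
            (|h (u x) ^ (β - 2) * deriv h (u x)| ^ p * h (u x)) :=
      integral_image_eq_integral_abs_deriv_smul hIm
        (fun x hx => (hu x hx).hasDerivWithinAt) hinj _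
    have h0ae : ∀ᵐ (t : ℝ), t ≠ (0:ℝ) := by
      rw [ae_iff]
      have : {t : ℝ | ¬ t ≠ 0} = {0} := by ext t; simp
      rw [this]
      exact Real.volume_singleton
    have E4 : ∫ x in I, |upDeriv (2 - β) f x| •
          (|h (u x) ^ (β - 2) * deriv h (u x)| ^ p * h (u x))
        = ∫ x in I, f x ^ (1 - p) := by
      apply setIntegral_congr_ae hIm
      filter_upwards [h0ae] with x hx0 hx
      -- setup
      have hcpos : 0 < |(2 - β - 2) * x| := abs_pos.mpr (mul_ne_zero hβ2 hx0)
      set c := |(2 - β - 2) * x| with hcdef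
      -- derivative of q = upPoint (2-β) at x
      have hinner : HasDerivAt (fun t : ℝ => (2 - β - 2) * t) (2 - β - 2) x := by
        simpa using (hasDerivAt_id x).const_mul (2 - β - 2)
      have habs : HasDerivAt (fun t : ℝ => |(2 - β - 2) * t|)
          (((SignType.sign ((2 - β - 2) * x) : ℝ)) * (2 - β - 2)) x :=
        (hasDerivAt_abs (mul_ne_zero hβ2 hx0)).comp x hinner
      have hq : HasDerivAt (fun t : ℝ => upPoint (2 - β) t)
          (((SignType.sign ((2 - β - 2) * x) : ℝ)) * (2 - β - 2) * (2 - (2 - β))⁻¹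
            * c ^ ((2 - (2 - β))⁻¹ - 1)) x := by
        have := habs.rpow_const (p := (2 - (2 - β))⁻¹) (Or.inl hcpos.ne')
        have hfun : (fun t : ℝ => |(2 - β - 2) * t| ^ (2 - (2 - β))⁻¹)
            = fun t : ℝ => upPoint (2 - β) t := by
          funext t; simp only [upPoint, if_neg h2β]
        rw [← hfun]
        exact this
      -- u is strictly differentiable at x
      have hcontu' : ContinuousAt (upDeriv (2 - β) f) x := by
        rw [hupDeq]
        have c1 : ContinuousAt (fun t : ℝ => |(2 - β - 2) * t|) x :=
          (continuous_abs.comp (continuous_const.mul continuous_id)).continuousAt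
        have c2 : ContinuousAt (fun t : ℝ => |(2 - β - 2) * t| ^ (2 - β - 2)⁻¹) x := by
          have hr := Real.continuousAt_rpow_const (|(2 - β - 2) * x|) ((2 - β - 2)⁻¹)
            (Or.inl hcpos.ne')
          exact ContinuousAt.comp (g := fun v : ℝ => v ^ (2 - β - 2)⁻¹)
            (f := fun t : ℝ => |(2 - β - 2) * t|) (x := x) hr c1
        exact (c2.mul (hdiff x hx).continuousAt).neg
      have hus : HasStrictDerivAt u (upDeriv (2 - β) f x) x :=
        hasStrictDerivAt_of_hasDerivAt_of_continuousAt
          (Filter.eventually_of_mem (hIo.mem_nhds hx) (fun y hy => hu y hy)) hcontu'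
      have hu'ne : upDeriv (2 - β) f x ≠ 0 := ne_of_lt (hu'neg x hx hx0)
      set W := HasStrictDerivAt.localInverse u (upDeriv (2 - β) f x) x hus hu'ne with hWdef
      have hWx : W (u x) = x :=
        ((hus.hasStrictFDerivAt_equiv hu'ne).eventually_left_inverse).self_of_nhds
      have hW : HasDerivAt W (upDeriv (2 - β) f x)⁻¹ (u x) :=
        (hus.to_localInverse hu'ne).hasDerivAt
      have hWc : ContinuousAt W (u x) := hW.continuousAt
      have hrev : ∀ᶠ v in nhds (u x), u (W v) = v :=
        (hus.hasStrictFDerivAt_equiv hu'ne).eventually_right_inverse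
      have hWI : ∀ᶠ v in nhds (u x), W v ∈ I :=
        hWc.eventually_mem (hIo.mem_nhds (hWx.symm ▸ hx))
      have hhq : h =ᶠ[nhds (u x)] ((fun t : ℝ => upPoint (2 - β) t) ∘ W) := by
        filter_upwards [hrev, hWI] with v h1 h2
        show h v = upPoint (2 - β) (W v)
        rw [← hh (W v) h2, h1]
      have hqW : HasDerivAt (fun t : ℝ => upPoint (2 - β) t)
          (((SignType.sign ((2 - β - 2) * x) : ℝ)) * (2 - β - 2) * (2 - (2 - β))⁻¹
            * c ^ ((2 - (2 - β))⁻¹ - 1)) (W (u x)) := by rw [hWx]; exact hq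
      have hcomp : HasDerivAt ((fun t : ℝ => upPoint (2 - β) t) ∘ W)
          ((((SignType.sign ((2 - β - 2) * x) : ℝ)) * (2 - β - 2) * (2 - (2 - β))⁻¹
            * c ^ ((2 - (2 - β))⁻¹ - 1)) * (upDeriv (2 - β) f x)⁻¹) (u x) :=
        HasDerivAt.comp (u x) hqW hW
      have hDh : HasDerivAt h
          ((((SignType.sign ((2 - β - 2) * x) : ℝ)) * (2 - β - 2) * (2 - (2 - β))⁻¹
            * c ^ ((2 - (2 - β))⁻¹ - 1)) * (upDeriv (2 - β) f x)⁻¹) (u x) :=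
        hcomp.congr_of_eventuallyEq hhq
      have hderivh : deriv h (u x)
          = (((SignType.sign ((2 - β - 2) * x) : ℝ)) * (2 - β - 2) * (2 - (2 - β))⁻¹
            * c ^ ((2 - (2 - β))⁻¹ - 1)) * (upDeriv (2 - β) f x)⁻¹ := hDh.deriv
      have hupt : h (u x) = c ^ (2 - (2 - β))⁻¹ := by
        rw [hh x hx]; simp only [upPoint, if_neg h2β]; rw [hcdef]
      simp only [smul_eq_mul]
      rw [hupt, hderivh, hupDeq]
      exact pw2 β (f x) c _ p hβ (hf.pos x hx) hcpos
        (abs_sign_cast _ (mul_ne_zero hβ2 hx0))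
    rw [E3, E4]
    have hY : 0 ≤ ∫ x in I, f x ^ (1 - p) :=
      setIntegral_nonneg hIm fun x hx => Real.rpow_nonneg (hf.pos x hx).le _
    rw [← Real.rpow_mul hY]
    congr 1
    rw [show (1:ℝ) - (1 - p) = p by ring, mul_inv]
end

section
/- Let f be a differentiable, strictly decreasing probability density. Then for the transformations with parameter α = 2: (i) σ_p[D_2[f]] = S̄_p[f] = (∫ f(x) |ln f(x)|^p dx)^{1/p}; (ii) N_λ[U_2[f]] = (∫ e^{-(λ-1)x} f(x) dx)^{1/(1-λ)} = (σ^{(E)}_{λ-1}[f])^{-1} for λ ≠ 1; (iii) S[U_2[f]] = ⟨x⟩_f = ∫ x f(x) dx, and consequently S[f] = ⟨s⟩_{D_2[f]}. -/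
open MeasureTheory Real Set Filter Bornology

/-- the transformations with parameter `α = 2`:
`σ_p[D₂ f] = S̄_p[f]`, `N_λ[U₂ f] = (σ^{(E)}_{λ-1}[f])⁻¹`, `S[U₂ f] = ⟨x⟩_f`,
and consequently `S[f] = ⟨s⟩_{D₂ f}`. -/
theorem alpha_two_transforms
    (xi xf : ℝ) (I : Set ℝ) (hI : I = Set.Ioo xi xf)
    (f g u h : ℝ → ℝ) (p lam : ℝ) (hp : 0 < p) (hlam : lam ≠ 1)
    (hf : IsDensityOn f I) (hmon : IsSmoothDecOn f I)
    (hg : IsDownTransform 2 f g I)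
    (hu : ∀ x ∈ I, HasDerivAt u (upDeriv 2 f x) x)
    (hh : ∀ x ∈ I, h (u x) = upPoint 2 x)
    (hint1 : MeasureTheory.IntegrableOn (fun s => |s| ^ p * g s) (sChange 2 f '' I))
    (hint2 : MeasureTheory.IntegrableOn (fun x => f x * |Real.log (f x)| ^ p) I)
    (hint3 : MeasureTheory.IntegrableOn (fun v => h v ^ lam) (u '' I))
    (hint4 : MeasureTheory.IntegrableOn (fun x => Real.exp (-(lam - 1) * x) * f x) I)
    (hint5 : MeasureTheory.IntegrableOn (fun v => h v * Real.log (h v)) (u '' I))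
    (hint6 : MeasureTheory.IntegrableOn (fun x => x * f x) I)
    (hint7 : MeasureTheory.IntegrableOn (fun x => f x * Real.log (f x)) I)
    (hint8 : MeasureTheory.IntegrableOn (fun s => s * g s) (sChange 2 f '' I)) :
    (∫ s in sChange 2 f '' I, |s| ^ p * g s) ^ (1 / p)
      = (∫ x in I, f x * |Real.log (f x)| ^ p) ^ (1 / p) ∧
    (∫ v in u '' I, h v ^ lam) ^ (1 / (1 - lam))
      = (∫ x in I, Real.exp (-(lam - 1) * x) * f x) ^ (1 / (1 - lam)) ∧
    (∫ v in u '' I, h v ^ lam) ^ (1 / (1 - lam))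
      = ((∫ x in I, Real.exp (-(lam - 1) * x) * f x) ^ (1 / (lam - 1)))⁻¹ ∧
    (-∫ v in u '' I, h v * Real.log (h v)) = (∫ x in I, x * f x) ∧
    (-∫ x in I, f x * Real.log (f x)) = (∫ s in sChange 2 f '' I, s * g s) := by
  
  subst hI
  have hse : sChange 2 f = fun y => -Real.log (f y) := by
    funext y; simp [sChange]
  have hup : ∀ x : ℝ, upPoint 2 x = Real.exp (-x) := fun x => by simp [upPoint]
  have hud : ∀ x : ℝ, upDeriv 2 f x = -(Real.exp x * f x) := fun x => by simp [upDeriv]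
  have hcont : ContinuousOn f (Set.Ioo xi xf) :=
    fun x hx => ((hmon.1 x hx).continuousAt).continuousWithinAt
  have hanti : StrictAntiOn f (Set.Ioo xi xf) :=
    strictAntiOn_of_deriv_neg (convex_Ioo _ _) hcont (by rw [interior_Ioo]; exact hmon.2)
  have hs' : ∀ x ∈ Set.Ioo xi xf,
      HasDerivWithinAt (sChange 2 f) (-(deriv f x / f x)) (Set.Ioo xi xf) x := by
    intro x hx
    rw [hse]
    exact (((hmon.1 x hx).hasDerivAt.log (ne_of_gt (hf.pos x hx))).neg).hasDerivWithinAt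
  have hsinj : Set.InjOn (sChange 2 f) (Set.Ioo xi xf) := by
    rw [hse]
    refine StrictMonoOn.injOn (fun x hx y hy hxy => ?_)
    have h1 : f y < f x := hanti hx hy hxy
    have h2 := Real.log_lt_log (hf.pos y hy) h1
    simpa using neg_lt_neg h2
  have huinj : Set.InjOn u (Set.Ioo xi xf) := by
    refine StrictAntiOn.injOn (strictAntiOn_of_deriv_neg (convex_Ioo _ _)
      (fun x hx => ((hu x hx).differentiableAt.continuousAt).continuousWithinAt) ?_)
    intro x hx
    rw [interior_Ioo] at hx
    rw [(hu x hx).deriv, hud]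
    have := mul_pos (Real.exp_pos x) (hf.pos x hx)
    linarith
  have hu' : ∀ x ∈ Set.Ioo xi xf, HasDerivWithinAt u (upDeriv 2 f x) (Set.Ioo xi xf) x :=
    fun x hx => (hu x hx).hasDerivWithinAt
  have habsu : ∀ x ∈ Set.Ioo xi xf, |upDeriv 2 f x| = Real.exp x * f x := by
    intro x hx
    rw [hud, abs_neg, abs_of_pos (mul_pos (Real.exp_pos x) (hf.pos x hx))]
  have hg' : ∀ x ∈ Set.Ioo xi xf, g (sChange 2 f x) = f x ^ (2:ℝ) / |deriv f x| :=
    fun x hx => by simpa [downAt] using hg x hx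
  have key1 : ∀ F : ℝ → ℝ, (∫ s in sChange 2 f '' Set.Ioo xi xf, F s)
      = ∫ x in Set.Ioo xi xf, |(-(deriv f x / f x))| * F (sChange 2 f x) := by
    intro F
    rw [integral_image_eq_integral_abs_deriv_smul measurableSet_Ioo hs' hsinj]
    simp [smul_eq_mul]
  have key2 : ∀ F : ℝ → ℝ, (∫ v in u '' Set.Ioo xi xf, F v)
      = ∫ x in Set.Ioo xi xf, |upDeriv 2 f x| * F (u x) := by
    intro F
    rw [integral_image_eq_integral_abs_deriv_smul measurableSet_Ioo hu' huinj]
    simp [smul_eq_mul]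
  have part1core : (∫ s in sChange 2 f '' Set.Ioo xi xf, |s| ^ p * g s)
      = ∫ x in Set.Ioo xi xf, f x * |Real.log (f x)| ^ p := by
    rw [key1]
    refine setIntegral_congr_fun measurableSet_Ioo (fun x hx => ?_)
    have hfx := hf.pos x hx
    have hdx := hmon.2 x hx
    have hd0 : |deriv f x| ≠ 0 := by
      simp only [abs_ne_zero]; exact ne_of_lt hdx
    rw [hg' x hx, show sChange 2 f x = -Real.log (f x) from by rw [hse],
      abs_neg, abs_div, abs_of_pos hfx, abs_neg]
    rw [show (f x) ^ (2:ℝ) = f x * f x from by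
      rw [show (2:ℝ) = ((2:ℕ):ℝ) from by norm_num, Real.rpow_natCast]; ring]
    field_simp
  have part2core : (∫ v in u '' Set.Ioo xi xf, h v ^ lam)
      = ∫ x in Set.Ioo xi xf, Real.exp (-(lam - 1) * x) * f x := by
    rw [key2]
    refine setIntegral_congr_fun measurableSet_Ioo (fun x hx => ?_)
    rw [habsu x hx, hh x hx, hup, ← Real.exp_mul, mul_right_comm, ← Real.exp_add]
    rw [show x + -x * lam = -(lam - 1) * x from by ring]
  have hA : (0:ℝ) ≤ ∫ x in Set.Ioo xi xf, Real.exp (-(lam - 1) * x) * f x :=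
    setIntegral_nonneg measurableSet_Ioo
      (fun x hx => mul_nonneg (Real.exp_pos _).le (hf.pos x hx).le)
  have h2 : lam - 1 ≠ 0 := sub_ne_zero.mpr hlam
  have h1 : (1:ℝ) - lam ≠ 0 := sub_ne_zero.mpr (Ne.symm hlam)
  have hexp : 1 / (1 - lam) = -(1 / (lam - 1)) := by
    field_simp
    ring
  have part4 : (-∫ v in u '' Set.Ioo xi xf, h v * Real.log (h v))
      = ∫ x in Set.Ioo xi xf, x * f x := by
    have heq : (∫ v in u '' Set.Ioo xi xf, h v * Real.log (h v))
        = ∫ x in Set.Ioo xi xf, -(x * f x) := by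
      rw [key2]
      refine setIntegral_congr_fun measurableSet_Ioo (fun x hx => ?_)
      rw [habsu x hx, hh x hx, hup, Real.log_exp]
      have he : Real.exp x * Real.exp (-x) = 1 := by rw [← Real.exp_add]; simp
      linear_combination (-x * f x) * he
    rw [heq, integral_neg, neg_neg]
  have part5 : (-∫ x in Set.Ioo xi xf, f x * Real.log (f x))
      = ∫ s in sChange 2 f '' Set.Ioo xi xf, s * g s := by
    have heq : (∫ s in sChange 2 f '' Set.Ioo xi xf, s * g s)
        = ∫ x in Set.Ioo xi xf, -(f x * Real.log (f x)) := by
      rw [key1]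
      refine setIntegral_congr_fun measurableSet_Ioo (fun x hx => ?_)
      have hfx := hf.pos x hx
      have hdx := hmon.2 x hx
      have hd0 : |deriv f x| ≠ 0 := by
        simp only [abs_ne_zero]; exact ne_of_lt hdx
      rw [hg' x hx, show sChange 2 f x = -Real.log (f x) from by rw [hse],
        abs_neg, abs_div, abs_of_pos hfx]
      rw [show (f x) ^ (2:ℝ) = f x * f x from by
        rw [show (2:ℝ) = ((2:ℕ):ℝ) from by norm_num, Real.rpow_natCast]; ring]
      field_simp
    rw [heq, integral_neg]
  refine ⟨by rw [part1core], by rw [part2core], ?_, part4, part5⟩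
  rw [part2core, hexp, Real.rpow_neg hA]
end

section
/- Let p > 1, λ ≠ 1 with λ > 1 - p*, and α ∈ ℝ \ {2}. Then the down transform of the stretched deformed Gaussian g_{p,λ} (restricted to [0,∞)) is the generalized-Beta-type density D_α[g_{p,λ}](s) = (|1-λ|^{1/p} / (a_{p,λ}^{(λ-1)/p*} p*)) · [(α-2)s]^{(α+λ-2)/(2-α)} · | [(α-2)s]^{(λ-1)/(2-α)} - a_{p,λ}^{λ-1} |^{-1/p}. -/
open MeasureTheory Real Set Filter Bornology

/-- The Beta function. -/
noncomputable def betaFn (a b : ℝ) : ℝ := Real.Gamma a * Real.Gamma b / Real.Gamma (a + b)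

/-- The normalization constant `a_{p,λ}` of the stretched deformed Gaussians. -/
noncomputable def aConst (p lam : ℝ) : ℝ :=
  if lam = 1 then (p / (p - 1)) / (2 * Real.Gamma ((p - 1) / p))
  else (p / (p - 1)) * |1 - lam| ^ ((p - 1) / p) /
    (2 * betaFn ((p - 1) / p) (lam / |1 - lam| + (if lam < 1 then 1 else 0) / p))

/-- The stretched deformed Gaussian `g_{p,λ}` on `ℝ` (symmetric):
`g_{p,λ}(x) = a_{p,λ} (1+(1-λ)|x|^{p*})₊^{1/(λ-1)}`, `g_{p,1}(x) = a_{p,1} e^{-|x|^{p*}}`. -/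
noncomputable def gpl (p lam : ℝ) (x : ℝ) : ℝ :=
  if lam = 1 then aConst p 1 * Real.exp (-|x| ^ (p / (p - 1)))
  else aConst p lam * (max (1 + (1 - lam) * |x| ^ (p / (p - 1))) 0) ^ (lam - 1)⁻¹

/-- The stretched deformed Gaussian `g_{p,λ}` restricted to `[0,∞)`. -/
noncomputable def gplHalf (p lam : ℝ) (x : ℝ) : ℝ :=
  if lam = 1 then aConst p 1 * Real.exp (-x ^ (p / (p - 1)))
  else aConst p lam * (max (1 + (1 - lam) * x ^ (p / (p - 1))) 0) ^ (lam - 1)⁻¹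

/-- The (interior of the) positive part of the support of `g_{p,λ}`. -/
def gplSupp (p lam : ℝ) : Set ℝ := {x | 0 < x ∧ 0 < 1 + (1 - lam) * x ^ (p / (p - 1))}

lemma betaFn_pos' {a b : ℝ} (ha : 0 < a) (hb : 0 < b) : 0 < betaFn a b := by
  unfold betaFn
  have := Real.Gamma_pos_of_pos ha
  have := Real.Gamma_pos_of_pos hb
  have := Real.Gamma_pos_of_pos (add_pos ha hb)
  positivity

lemma aConst_pos' (p lam : ℝ) (hp : 1 < p) (hlam : lam ≠ 1)
    (hlam2 : 1 - p / (p - 1) < lam) : 0 < aConst p lam := by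
  have hp1 : (0:ℝ) < p - 1 := by linarith
  have hp0 : (0:ℝ) < p := by linarith
  have hq : 0 < p / (p - 1) := by positivity
  have hb1 : 0 < (p - 1) / p := by positivity
  rw [aConst, if_neg hlam]
  have hL : (0:ℝ) < |1 - lam| := abs_pos.mpr (sub_ne_zero.mpr fun h => hlam (by linarith))
  have hb2 : 0 < lam / |1 - lam| + (if lam < 1 then 1 else 0) / p := by
    rcases lt_or_gt_of_ne hlam with h | h
    · rw [if_pos h, abs_of_pos (by linarith : (0:ℝ) < 1 - lam)]
      have hnum : 0 < lam * (p - 1) + 1 := by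
        have h1 : 1 - p / (p-1) = -(1/(p-1)) := by field_simp; ring
        rw [h1] at hlam2
        have h2 : (0:ℝ) < lam + 1/(p-1) := by linarith
        have h3 : (1/(p-1))*(p-1) = 1 := by field_simp
        nlinarith [mul_pos h2 hp1]
      have heq : lam/(1-lam) + 1/p = (lam*(p-1)+1)/((1-lam)*p) := by
        rw [div_add_div _ _ (by linarith : (1:ℝ)-lam ≠ 0) hp0.ne']
        congr 1
        ring
      rw [heq]
      exact div_pos hnum (mul_pos (by linarith) hp0)
    · rw [if_neg (not_lt.mpr h.le), abs_of_neg (by linarith)]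
      have : 0 < lam / -(1 - lam) := div_pos (by linarith) (by linarith)
      simpa using this
  have := betaFn_pos' hb1 hb2
  positivity

/-- explicit form (a generalized Beta density) of the down transform of
the stretched deformed Gaussian `g_{p,λ}` restricted to `[0,∞)`. -/
theorem down_of_stretched_gaussian
    (p lam α : ℝ) (hp : 1 < p) (hlam : lam ≠ 1)
    (hlam2 : 1 - p / (p - 1) < lam) (hα : α ≠ 2)
    (g : ℝ → ℝ)
    (hg : IsDownTransform α (gplHalf p lam) g (gplSupp p lam)) :
    ∀ s ∈ sChange α (gplHalf p lam) '' gplSupp p lam,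
      g s = |1 - lam| ^ p⁻¹ / (aConst p lam ^ ((lam - 1) / (p / (p - 1))) * (p / (p - 1))) *
        ((α - 2) * s) ^ ((α + lam - 2) / (2 - α)) *
        |((α - 2) * s) ^ ((lam - 1) / (2 - α)) - aConst p lam ^ (lam - 1)| ^ (-p⁻¹) := by
  rintro s ⟨x, hx, rfl⟩
  obtain ⟨hx0, ht0⟩ := hx
  have hp1 : (0:ℝ) < p - 1 := by linarith
  have hp0 : (0:ℝ) < p := by linarith
  have ha : 0 < aConst p lam := aConst_pos' p lam hp hlam hlam2
  have hlam1 : lam - 1 ≠ 0 := sub_ne_zero.mpr hlam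
  have hα2 : α - 2 ≠ 0 := sub_ne_zero.mpr hα
  have h2α : (2:ℝ) - α ≠ 0 := fun h => hα (by linarith)
  have hL0 : (0:ℝ) < |1 - lam| := abs_pos.mpr (sub_ne_zero.mpr fun h => hlam (by linarith))
  set a := aConst p lam with ha_def
  set q := p / (p - 1) with hq_def
  have hq0 : 0 < q := by rw [hq_def]; positivity
  set t := 1 + (1 - lam) * x ^ q with ht_def
  have ht : 0 < t := ht0
  set r := (lam - 1)⁻¹ with hr_def
  have htr : 0 < t ^ r := Real.rpow_pos_of_pos ht _
  have hA : 0 < a * t ^ r := by positivity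
  have hF : gplHalf p lam x = a * t ^ r := by
    rw [gplHalf, if_neg hlam, max_eq_left ht.le]
  -- derivative computation
  have hev : gplHalf p lam =ᶠ[nhds x] fun y => a * (1 + (1 - lam) * y ^ q) ^ r := by
    have hcont : ContinuousAt (fun y : ℝ => 1 + (1 - lam) * y ^ q) x :=
      ((Real.continuousAt_rpow_const x q (Or.inl hx0.ne')).const_mul (1 - lam)).const_add 1
    filter_upwards [continuousAt_const.eventually_lt hcont ht] with y hy
    rw [gplHalf, if_neg hlam, max_eq_left hy.le]
  have hderiv : HasDerivAt (fun y => a * (1 + (1 - lam) * y ^ q) ^ r)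
      (a * ((1 - lam) * (q * x ^ (q - 1)) * r * t ^ (r - 1))) x := by
    have h1 : HasDerivAt (fun y : ℝ => 1 + (1 - lam) * y ^ q)
        ((1 - lam) * (q * x ^ (q - 1))) x := by
      have h0 := Real.hasDerivAt_rpow_const (x := x) (p := q) (Or.inl hx0.ne')
      exact (h0.const_mul (1 - lam)).const_add 1
    exact (h1.rpow_const (Or.inl ht.ne')).const_mul a
  have hD : deriv (gplHalf p lam) x = -(a * q * x ^ (q - 1) * t ^ (r - 1)) := by
    rw [hev.deriv_eq, hderiv.deriv]
    have hr1 : (1 - lam) * r = -1 := by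
      rw [hr_def]
      field_simp
      ring
    linear_combination a * q * x ^ (q - 1) * t ^ (r - 1) * hr1
  have hxq1 : 0 < x ^ (q - 1) := Real.rpow_pos_of_pos hx0 _
  have htr1 : 0 < t ^ (r - 1) := Real.rpow_pos_of_pos ht _
  have hDabs : |deriv (gplHalf p lam) x| = a * q * x ^ (q - 1) * t ^ (r - 1) := by
    rw [hD, abs_neg, abs_of_pos (by positivity)]
  have hs1 : (α - 2) * sChange α (gplHalf p lam) x = (a * t ^ r) ^ (2 - α) := by
    rw [sChange, if_neg hα, hF]
    field_simp
  rw [hg x ⟨hx0, ht0⟩]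
  simp only [downAt, hDabs, hF, hs1]
  have e1 : ((a * t ^ r) ^ (2 - α)) ^ ((α + lam - 2) / (2 - α)) = (a * t ^ r) ^ (α + lam - 2) := by
    rw [← Real.rpow_mul hA.le]
    congr 1
    field_simp
  have e2 : ((a * t ^ r) ^ (2 - α)) ^ ((lam - 1) / (2 - α)) = a ^ (lam - 1) * t := by
    rw [← Real.rpow_mul hA.le]
    have h3 : (2 - α) * ((lam - 1) / (2 - α)) = lam - 1 := by field_simp
    rw [h3, Real.mul_rpow ha.le htr.le, ← Real.rpow_mul ht.le]
    have h4 : r * (lam - 1) = 1 := inv_mul_cancel₀ hlam1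
    rw [h4, Real.rpow_one]
  have e3 : |a ^ (lam - 1) * t - a ^ (lam - 1)| = a ^ (lam - 1) * (|1 - lam| * x ^ q) := by
    have h5 : a ^ (lam - 1) * t - a ^ (lam - 1) = a ^ (lam - 1) * ((1 - lam) * x ^ q) := by
      rw [ht_def]
      ring
    rw [h5, abs_mul, abs_of_pos (Real.rpow_pos_of_pos ha _), abs_mul,
      abs_of_pos (Real.rpow_pos_of_pos hx0 _)]
  rw [e1, e2, e3]
  have hxq : 0 < x ^ q := Real.rpow_pos_of_pos hx0 _
  have halam : 0 < a ^ (lam - 1) := Real.rpow_pos_of_pos ha _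
  apply Real.log_injOn_pos (Set.mem_Ioi.mpr (by positivity)) (Set.mem_Ioi.mpr (by positivity))
  have k1 : (0:ℝ) < a ^ ((lam - 1) / q) := Real.rpow_pos_of_pos ha _
  have k2 : (0:ℝ) < (a * t ^ r) ^ (α + lam - 2) := Real.rpow_pos_of_pos hA _
  have k3 : (0:ℝ) < a ^ (lam - 1) * (|1 - lam| * x ^ q) := by positivity
  have k4 : (0:ℝ) < (a * t ^ r) ^ α := Real.rpow_pos_of_pos hA _
  have k5 : (0:ℝ) < |1 - lam| ^ p⁻¹ := Real.rpow_pos_of_pos hL0 _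
  have m1 : (0:ℝ) < (a ^ (lam - 1) * (|1 - lam| * x ^ q)) ^ (-p⁻¹) := Real.rpow_pos_of_pos k3 _
  have m2 : (0:ℝ) < |1 - lam| ^ p⁻¹ / (a ^ ((lam - 1) / q) * q) := by positivity
  simp only [Real.log_div, Real.log_mul, Real.log_rpow, ne_eq, mul_eq_zero, not_or,
    div_eq_zero_iff, m1, m2, m1.ne', m2.ne',
    ha, ht, hx0, hL0, hA, halam, hxq, hq0, htr, hxq1, htr1, hp0, hp1, k1, k2, k3, k4, k5,
    ha.ne', ht.ne', hx0.ne', hL0.ne', hA.ne', halam.ne', hxq.ne', hq0.ne', htr.ne',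
    hxq1.ne', htr1.ne', hp0.ne', hp1.ne', k1.ne', k2.ne', k3.ne', k4.ne', k5.ne',
    not_false_eq_true, and_true, true_and]
  rw [hq_def, hr_def]
  field_simp
  ring
end
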